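/- Let k ∈ ℝ³ and A be a symmetric 3×3 real matrix with Ak = 0, and for i = 1,2 let Kᵢ ∈ M₃(ℝ) with tr(Kᵢ) = 0 and Fᵢ be homogeneous cubic polynomials with (KᵢX)·∇Fᵢ = 0, such that both brackets {·,·}ᵢ := {·,·}_{k,A,Kᵢ,Fᵢ} satisfy the Jacobi identity. Then for T ∈ GL(3,ℝ), the equality {g∘T, h∘T}₁ = ({g,h}₂)∘T holds for all polynomials g,h (i.e., T pushes the first Poisson structure forward to the second) if and only if Tk = k, TᵀAT = det(T)·A, K₂ = T K₁ T⁻¹, and F₂∘T = det(T)·F₁. -/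

import Mathlib

open MvPolynomial Matrix

noncomputable section

/-- The Euler operator `E(g) = Σᵢ xᵢ ∂g/∂xᵢ`. -/
def euler (g : MvPolynomial (Fin 3) ℝ) : MvPolynomial (Fin 3) ℝ :=
  ∑ i : Fin 3, X i * pderiv i g

/-- `k·∇g` for a constant vector `k ∈ ℝ³`. -/
def dotGradConst (k : Fin 3 → ℝ) (g : MvPolynomial (Fin 3) ℝ) : MvPolynomial (Fin 3) ℝ :=
  ∑ i : Fin 3, C (k i) * pderiv i g

/-- `(KX)·∇g` for a matrix `K`. -/
def dotGradLin (K : Matrix (Fin 3) (Fin 3) ℝ) (g : MvPolynomial (Fin 3) ℝ) :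
    MvPolynomial (Fin 3) ℝ :=
  ∑ i : Fin 3, (∑ j : Fin 3, C (K i j) * X j) * pderiv i g

/-- The quadratic form `XᵀMX` as a polynomial. -/
def quadForm (M : Matrix (Fin 3) (Fin 3) ℝ) : MvPolynomial (Fin 3) ℝ :=
  ∑ i : Fin 3, ∑ j : Fin 3, C (M i j) * X i * X j

/-- `det[∇a, ∇b, ∇c]`: the determinant of the 3×3 matrix whose columns are the
gradients of `a`, `b`, `c`. -/
def gradDet (a b c : MvPolynomial (Fin 3) ℝ) : MvPolynomial (Fin 3) ℝ :=
  (Matrix.of fun i j => ![fun i' => pderiv i' a, fun i' => pderiv i' b,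
    fun i' => pderiv i' c] j i).det

/-- The bracket `{g,h}_{k,A,K,F}` of the bivector field `π_{k,f} + π_{K,F}`
(with `f = XᵀAX`): `det[∇(f+F), ∇g, ∇h] + (1/2)(E(g)(k·∇h) − (k·∇g)E(h))
+ (1/3)(E(g)((KX)·∇h) − ((KX)·∇g)E(h))`. -/
def pbracket (k : Fin 3 → ℝ) (A K : Matrix (Fin 3) (Fin 3) ℝ)
    (F : MvPolynomial (Fin 3) ℝ) (g h : MvPolynomial (Fin 3) ℝ) : MvPolynomial (Fin 3) ℝ :=
  gradDet (quadForm A + F) g h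
    + C (1 / 2 : ℝ) * (euler g * dotGradConst k h - dotGradConst k g * euler h)
    + C (1 / 3 : ℝ) * (euler g * dotGradLin K h - dotGradLin K g * euler h)

/-- `g∘M`: the polynomial `X ↦ g(MX)`. -/
def polyComp (M : Matrix (Fin 3) (Fin 3) ℝ) (g : MvPolynomial (Fin 3) ℝ) :
    MvPolynomial (Fin 3) ℝ :=
  aeval (fun i => ∑ j : Fin 3, C (M i j) * X j) g

@[simp] lemma polyComp_C (M : Matrix (Fin 3) (Fin 3) ℝ) (r : ℝ) :
    polyComp M (C r) = C r := by simp [polyComp]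

@[simp] lemma polyComp_X (M : Matrix (Fin 3) (Fin 3) ℝ) (i : Fin 3) :
    polyComp M (X i) = ∑ j : Fin 3, C (M i j) * X j := by simp [polyComp]

@[simp] lemma polyComp_zero (M : Matrix (Fin 3) (Fin 3) ℝ) : polyComp M 0 = 0 := by
  simp [polyComp]

@[simp] lemma polyComp_one_poly (M : Matrix (Fin 3) (Fin 3) ℝ) : polyComp M 1 = 1 := by
  simp [polyComp]

@[simp] lemma polyComp_add (M : Matrix (Fin 3) (Fin 3) ℝ) (g h : MvPolynomial (Fin 3) ℝ) :
    polyComp M (g + h) = polyComp M g + polyComp M h := by simp [polyComp]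

@[simp] lemma polyComp_mul (M : Matrix (Fin 3) (Fin 3) ℝ) (g h : MvPolynomial (Fin 3) ℝ) :
    polyComp M (g * h) = polyComp M g * polyComp M h := by simp [polyComp]

@[simp] lemma polyComp_sub (M : Matrix (Fin 3) (Fin 3) ℝ) (g h : MvPolynomial (Fin 3) ℝ) :
    polyComp M (g - h) = polyComp M g - polyComp M h := by simp [polyComp]

lemma polyComp_polyComp (M N : Matrix (Fin 3) (Fin 3) ℝ) (g : MvPolynomial (Fin 3) ℝ) :
    polyComp M (polyComp N g) = polyComp (N * M) g := by
  induction g using MvPolynomial.induction_on with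
  | C a => simp
  | add p q hp hq => simp [hp, hq]
  | mul_X p n hp =>
      rw [polyComp_mul, polyComp_mul, polyComp_mul, hp, polyComp_X N, polyComp_X (N*M)]
      congr 1
      simp only [polyComp, map_sum, _root_.map_mul, aeval_C, aeval_X, Matrix.mul_apply,
        Fin.sum_univ_three, map_add, MvPolynomial.algebraMap_eq]
      ring

lemma polyComp_one (g : MvPolynomial (Fin 3) ℝ) : polyComp 1 g = g := by
  induction g using MvPolynomial.induction_on with
  | C a => simp
  | add p q hp hq => simp [hp, hq]
  | mul_X p n hp => simp [hp, Matrix.one_apply, Finset.sum_ite_eq, ite_mul]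

lemma pderiv_polyComp (T : Matrix (Fin 3) (Fin 3) ℝ) (i : Fin 3) (g : MvPolynomial (Fin 3) ℝ) :
    pderiv i (polyComp T g) = ∑ j : Fin 3, C (T j i) * polyComp T (pderiv j g) := by
  induction g using MvPolynomial.induction_on with
  | C a => simp
  | add p q hp hq =>
      simp only [polyComp_add, map_add, hp, hq, mul_add, Finset.sum_add_distrib]
  | mul_X p n hp =>
      have h1 : pderiv i (polyComp T (X n)) = C (T n i) := by
        rw [polyComp_X, map_sum]
        have : ∀ j : Fin 3, pderiv i (C (T n j) * X j) = if j = i then C (T n j) else 0 := by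
          intro j
          rw [pderiv_C_mul, pderiv_X, Pi.single_apply]
          split <;> simp [*]
        simp only [this, Finset.sum_ite_eq', Finset.mem_univ, if_true]
      rw [polyComp_mul, pderiv_mul, hp, h1]
      have h2 : ∀ j : Fin 3, polyComp T (pderiv j (p * X n))
          = polyComp T (pderiv j p) * polyComp T (X n)
            + (if n = j then polyComp T p else 0) := by
        intro j
        rw [pderiv_mul, polyComp_add, polyComp_mul, polyComp_mul, pderiv_X, Pi.single_apply]
        split <;> simp [*, eq_comm]
      simp only [h2, mul_add, Finset.sum_add_distrib, Finset.mul_sum]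
      congr 1
      · rw [Finset.sum_mul]
        refine Finset.sum_congr rfl fun j _ => by ring
      · have : ∀ j : Fin 3, C (T j i) * (if n = j then polyComp T p else 0)
            = if n = j then C (T j i) * polyComp T p else 0 := fun j => by split <;> simp
        simp only [this, Finset.sum_ite_eq, Finset.mem_univ, if_true, mul_comm]

lemma euler_polyComp (T : Matrix (Fin 3) (Fin 3) ℝ) (g : MvPolynomial (Fin 3) ℝ) :
    euler (polyComp T g) = polyComp T (euler g) := by
  simp only [euler, Fin.sum_univ_three, pderiv_polyComp, polyComp_add, polyComp_mul, polyComp_X]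
  ring

lemma dotGradConst_polyComp (T : Matrix (Fin 3) (Fin 3) ℝ) (k : Fin 3 → ℝ)
    (g : MvPolynomial (Fin 3) ℝ) :
    dotGradConst k (polyComp T g) = polyComp T (dotGradConst (T.mulVec k) g) := by
  simp only [dotGradConst, Fin.sum_univ_three, pderiv_polyComp, polyComp_add, polyComp_mul,
    polyComp_C, Matrix.mulVec, dotProduct, map_add, C_mul]
  ring

lemma polyComp_linForm (T : Matrix (Fin 3) (Fin 3) ℝ) (v : Fin 3 → ℝ) :
    polyComp T (∑ m : Fin 3, C (v m) * X m) = ∑ l : Fin 3, C (Matrix.vecMul v T l) * X l := by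
  simp only [Fin.sum_univ_three, polyComp_add, polyComp_mul, polyComp_C, polyComp_X,
    Matrix.vecMul, dotProduct, map_add, C_mul]
  ring

lemma dotGradLin_polyComp (T K M : Matrix (Fin 3) (Fin 3) ℝ) (h : M * T = T * K)
    (g : MvPolynomial (Fin 3) ℝ) :
    dotGradLin K (polyComp T g) = polyComp T (dotGradLin M g) := by
  have h3 : ∀ l : Fin 3, ∀ j : Fin 3, Matrix.vecMul (M j) T l = (T * K) j l := by
    intro l j; rw [← h]; rfl
  have key : ∀ j : Fin 3, polyComp T (C (M j 0) * X 0 + C (M j 1) * X 1 + C (M j 2) * X 2)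
      = C ((T * K) j 0) * X 0 + C ((T * K) j 1) * X 1 + C ((T * K) j 2) * X 2 := by
    intro j
    have h2 := polyComp_linForm T (M j)
    simp only [Fin.sum_univ_three] at h2
    rw [h2, h3 0 j, h3 1 j, h3 2 j]
  simp only [dotGradLin, Fin.sum_univ_three, pderiv_polyComp, polyComp_add, polyComp_mul, key,
    Matrix.mul_apply, map_add, C_mul]
  ring

lemma polyComp_quadForm (T M : Matrix (Fin 3) (Fin 3) ℝ) :
    polyComp T (quadForm M) = quadForm (Tᵀ * M * T) := by
  simp only [quadForm, Fin.sum_univ_three, polyComp_add, polyComp_mul, polyComp_C, polyComp_X,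
    Matrix.mul_apply, Matrix.transpose_apply, map_add, C_mul]
  ring

lemma quadForm_smul (r : ℝ) (M : Matrix (Fin 3) (Fin 3) ℝ) :
    quadForm (r • M) = C r * quadForm M := by
  simp only [quadForm, Fin.sum_univ_three, Matrix.smul_apply, smul_eq_mul, C_mul]
  ring

lemma gradDet_add_left (p q b c : MvPolynomial (Fin 3) ℝ) :
    gradDet (p + q) b c = gradDet p b c + gradDet q b c := by
  simp only [gradDet, Matrix.det_fin_three, Matrix.of_apply, Matrix.cons_val_zero,
    Matrix.cons_val_one, Matrix.head_cons, Matrix.cons_val_two, Matrix.tail_cons, map_add]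
  ring

lemma gradDet_C_mul_left (r : ℝ) (p b c : MvPolynomial (Fin 3) ℝ) :
    gradDet (C r * p) b c = C r * gradDet p b c := by
  simp only [gradDet, Matrix.det_fin_three, Matrix.of_apply, Matrix.cons_val_zero,
    Matrix.cons_val_one, Matrix.head_cons, Matrix.cons_val_two, Matrix.tail_cons, pderiv_C_mul]
  ring

lemma gradDet_polyComp (T : Matrix (Fin 3) (Fin 3) ℝ) (a b c : MvPolynomial (Fin 3) ℝ) :
    gradDet (polyComp T a) (polyComp T b) (polyComp T c)
      = C T.det * polyComp T (gradDet a b c) := by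
  simp only [gradDet, Matrix.det_fin_three, Matrix.of_apply, Matrix.cons_val_zero,
    Matrix.cons_val_one, Matrix.head_cons, Matrix.cons_val_two, Matrix.tail_cons,
    pderiv_polyComp, Fin.sum_univ_three, polyComp_add, polyComp_mul, polyComp_sub,
    map_sub, map_add, C_mul]
  ring

lemma pbracket_polyComp (k : Fin 3 → ℝ) (A K : Matrix (Fin 3) (Fin 3) ℝ)
    (F : MvPolynomial (Fin 3) ℝ) (T : Matrix (Fin 3) (Fin 3) ℝ) (hT : IsUnit T.det)
    (g h : MvPolynomial (Fin 3) ℝ) :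
    pbracket k A K F (polyComp T g) (polyComp T h)
      = polyComp T (pbracket (T.mulVec k) (T.det • ((T⁻¹)ᵀ * A * T⁻¹)) (T * K * T⁻¹)
          (C T.det * polyComp T⁻¹ F) g h) := by
  have hT'T : T⁻¹ * T = 1 := Matrix.nonsing_inv_mul T hT
  have hcomp : ∀ p, polyComp T (polyComp T⁻¹ p) = p := fun p => by
    rw [polyComp_polyComp, hT'T, polyComp_one]
  have hMT : (T * K * T⁻¹) * T = T * K := by rw [Matrix.mul_assoc, hT'T, Matrix.mul_one]
  have hquad : quadForm (T.det • ((T⁻¹)ᵀ * A * T⁻¹)) + C T.det * polyComp T⁻¹ F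
      = C T.det * polyComp T⁻¹ (quadForm A + F) := by
    rw [quadForm_smul, ← polyComp_quadForm, polyComp_add, mul_add]
  have key1 : gradDet (quadForm A + F) (polyComp T g) (polyComp T h)
      = polyComp T (gradDet (quadForm (T.det • ((T⁻¹)ᵀ * A * T⁻¹)) + C T.det * polyComp T⁻¹ F)
          g h) := by
    conv_lhs => rw [← hcomp (quadForm A + F)]
    rw [gradDet_polyComp, hquad, gradDet_C_mul_left, polyComp_mul, polyComp_C]
  simp only [pbracket, key1, euler_polyComp, dotGradConst_polyComp,
    dotGradLin_polyComp T K (T * K * T⁻¹) hMT, polyComp_add, polyComp_mul, polyComp_sub,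
    polyComp_C]

lemma coeff_pderiv (i : Fin 3) (φ : MvPolynomial (Fin 3) ℝ) (m : Fin 3 →₀ ℕ) :
    coeff m (pderiv i φ) = ((m i : ℝ) + 1) * coeff (m + (Finsupp.single i 1 : Fin 3 →₀ ℕ)) φ := by
  induction φ using MvPolynomial.induction_on' with
  | add p q hp hq => simp [hp, hq, mul_add]
  | monomial u a =>
      rw [pderiv_monomial, coeff_monomial, coeff_monomial]
      by_cases h2 : u = m + (Finsupp.single i 1 : Fin 3 →₀ ℕ)
      · subst h2
        have hc1 : m + (Finsupp.single i 1 : Fin 3 →₀ ℕ) - (Finsupp.single i 1 : Fin 3 →₀ ℕ) = m := by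
          ext j; simp [Finsupp.add_apply, Finsupp.tsub_apply]
        have hc2 : (m + (Finsupp.single i 1 : Fin 3 →₀ ℕ)) i = m i + 1 := by
          simp [Finsupp.add_apply, Finsupp.single_eq_same]
        rw [if_pos hc1, if_pos rfl, hc2]
        push_cast
        ring
      · rw [if_neg h2, mul_zero]
        by_cases hu : u i = 0
        · split_ifs with h1
          · simp [hu]
          · rfl
        · have hle : (Finsupp.single i 1 : Fin 3 →₀ ℕ) ≤ u := by
            rw [Finsupp.single_le_iff]
            omega
          have h1 : ¬(u - (Finsupp.single i 1 : Fin 3 →₀ ℕ) = m) := by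
            intro hc
            apply h2
            rw [← hc, tsub_add_cancel_of_le hle]
          rw [if_neg h1]

lemma euler_of_isHomogeneous {n : ℕ} {φ : MvPolynomial (Fin 3) ℝ}
    (h : φ.IsHomogeneous n) : euler φ = C (n : ℝ) * φ := by
  ext m
  rw [coeff_C_mul]
  have : ∀ i : Fin 3, coeff m (X i * pderiv i φ) = (m i : ℝ) * coeff m φ := by
    intro i
    rw [mul_comm, coeff_mul_X']
    split_ifs with hs
    · rw [coeff_pderiv]
      have hmi : m i ≠ 0 := Finsupp.mem_support_iff.mp hs
      have h1 : (m - (Finsupp.single i 1 : Fin 3 →₀ ℕ)) i = m i - 1 := by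
        simp [Finsupp.tsub_apply]
      have h2 : m - (Finsupp.single i 1 : Fin 3 →₀ ℕ) + (Finsupp.single i 1 : Fin 3 →₀ ℕ) = m := by
        refine tsub_add_cancel_of_le ?_
        rw [Finsupp.single_le_iff]; omega
      rw [h1, h2]
      congr 1
      have : (1:ℝ) ≤ (m i : ℝ) := by exact_mod_cast Nat.one_le_iff_ne_zero.mpr hmi
      push_cast [Nat.cast_sub (Nat.one_le_iff_ne_zero.mpr hmi)]
      ring
    · have hmi : m i = 0 := by
        by_contra hc
        exact hs (Finsupp.mem_support_iff.mpr hc)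
      simp [hmi]
  rw [euler, coeff_sum]
  simp only [this]
  rw [← Finset.sum_mul]
  by_cases hc : coeff m φ = 0
  · simp [hc]
  · congr 1
    have hd := h hc
    have hdeg : m.degree = n := by
      rw [Finsupp.degree_eq_weight_one]; exact_mod_cast hd
    have hsum : m.degree = ∑ i : Fin 3, m i :=
      Finset.sum_subset (Finset.subset_univ _)
        (fun x _ hx => Finsupp.notMem_support_iff.mp hx)
    rw [← Nat.cast_sum, ← hsum, hdeg]

@[simp] lemma pdX01 : pderiv (0:Fin 3) (X (1:Fin 3) : MvPolynomial (Fin 3) ℝ) = 0 :=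
  pderiv_X_of_ne (by decide)
@[simp] lemma pdX02 : pderiv (0:Fin 3) (X (2:Fin 3) : MvPolynomial (Fin 3) ℝ) = 0 :=
  pderiv_X_of_ne (by decide)
@[simp] lemma pdX10 : pderiv (1:Fin 3) (X (0:Fin 3) : MvPolynomial (Fin 3) ℝ) = 0 :=
  pderiv_X_of_ne (by decide)
@[simp] lemma pdX12 : pderiv (1:Fin 3) (X (2:Fin 3) : MvPolynomial (Fin 3) ℝ) = 0 :=
  pderiv_X_of_ne (by decide)
@[simp] lemma pdX20 : pderiv (2:Fin 3) (X (0:Fin 3) : MvPolynomial (Fin 3) ℝ) = 0 :=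
  pderiv_X_of_ne (by decide)
@[simp] lemma pdX21 : pderiv (2:Fin 3) (X (1:Fin 3) : MvPolynomial (Fin 3) ℝ) = 0 :=
  pderiv_X_of_ne (by decide)

lemma gradDet_X01 (a : MvPolynomial (Fin 3) ℝ) : gradDet a (X 0) (X 1) = pderiv 2 a := by
  simp [gradDet, Matrix.det_fin_three, Matrix.vecHead, Matrix.vecTail]

lemma gradDet_X02 (a : MvPolynomial (Fin 3) ℝ) : gradDet a (X 0) (X 2) = -pderiv 1 a := by
  simp [gradDet, Matrix.det_fin_three, Matrix.vecHead, Matrix.vecTail]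

lemma gradDet_X12 (a : MvPolynomial (Fin 3) ℝ) : gradDet a (X 1) (X 2) = pderiv 0 a := by
  simp [gradDet, Matrix.det_fin_three, Matrix.vecHead, Matrix.vecTail]

lemma euler_X (i : Fin 3) : euler (X i : MvPolynomial (Fin 3) ℝ) = X i := by
  fin_cases i <;> simp [euler, Fin.sum_univ_three]

lemma dotGradConst_X (k : Fin 3 → ℝ) (i : Fin 3) :
    dotGradConst k (X i) = C (k i) := by
  fin_cases i <;> simp [dotGradConst, Fin.sum_univ_three]

lemma dotGradLin_X (K : Matrix (Fin 3) (Fin 3) ℝ) (i : Fin 3) :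
    dotGradLin K (X i) = C (K i 0) * X 0 + C (K i 1) * X 1 + C (K i 2) * X 2 := by
  fin_cases i <;> simp [dotGradLin, Fin.sum_univ_three]

lemma pderiv_quadForm (i : Fin 3) (A : Matrix (Fin 3) (Fin 3) ℝ) :
    pderiv i (quadForm A) = C (A i 0 + A 0 i) * X 0 + C (A i 1 + A 1 i) * X 1
      + C (A i 2 + A 2 i) * X 2 := by
  fin_cases i <;>
    · simp [quadForm, Fin.sum_univ_three, pderiv_mul, map_add]
      ring

lemma pbracket_X01 (k : Fin 3 → ℝ) (A K : Matrix (Fin 3) (Fin 3) ℝ) (G : MvPolynomial (Fin 3) ℝ) :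
    pbracket k A K G (X 0) (X 1) =
      (C (A 2 0 + A 0 2) * X 0 + C (A 2 1 + A 1 2) * X 1 + C (A 2 2 + A 2 2) * X 2) + pderiv 2 G
      + C (1/2 : ℝ) * (X 0 * C (k 1) - C (k 0) * X 1)
      + C (1/3 : ℝ) * (X 0 * (C (K 1 0) * X 0 + C (K 1 1) * X 1 + C (K 1 2) * X 2)
          - (C (K 0 0) * X 0 + C (K 0 1) * X 1 + C (K 0 2) * X 2) * X 1) := by
  rw [pbracket, gradDet_X01, euler_X, euler_X, dotGradConst_X, dotGradConst_X, dotGradLin_X,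
    dotGradLin_X, map_add, pderiv_quadForm]

lemma pbracket_X02 (k : Fin 3 → ℝ) (A K : Matrix (Fin 3) (Fin 3) ℝ) (G : MvPolynomial (Fin 3) ℝ) :
    pbracket k A K G (X 0) (X 2) =
      -((C (A 1 0 + A 0 1) * X 0 + C (A 1 1 + A 1 1) * X 1 + C (A 1 2 + A 2 1) * X 2) + pderiv 1 G)
      + C (1/2 : ℝ) * (X 0 * C (k 2) - C (k 0) * X 2)
      + C (1/3 : ℝ) * (X 0 * (C (K 2 0) * X 0 + C (K 2 1) * X 1 + C (K 2 2) * X 2)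
          - (C (K 0 0) * X 0 + C (K 0 1) * X 1 + C (K 0 2) * X 2) * X 2) := by
  rw [pbracket, gradDet_X02, euler_X, euler_X, dotGradConst_X, dotGradConst_X, dotGradLin_X,
    dotGradLin_X, map_add, pderiv_quadForm, neg_add]

lemma pbracket_X12 (k : Fin 3 → ℝ) (A K : Matrix (Fin 3) (Fin 3) ℝ) (G : MvPolynomial (Fin 3) ℝ) :
    pbracket k A K G (X 1) (X 2) =
      (C (A 0 0 + A 0 0) * X 0 + C (A 0 1 + A 1 0) * X 1 + C (A 0 2 + A 2 0) * X 2) + pderiv 0 G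
      + C (1/2 : ℝ) * (X 1 * C (k 2) - C (k 1) * X 2)
      + C (1/3 : ℝ) * (X 1 * (C (K 2 0) * X 0 + C (K 2 1) * X 1 + C (K 2 2) * X 2)
          - (C (K 1 0) * X 0 + C (K 1 1) * X 1 + C (K 1 2) * X 2) * X 2) := by
  rw [pbracket, gradDet_X12, euler_X, euler_X, dotGradConst_X, dotGradConst_X, dotGradLin_X,
    dotGradLin_X, map_add, pderiv_quadForm]

lemma pderiv_pderiv_comm (i j : Fin 3) (φ : MvPolynomial (Fin 3) ℝ) :
    pderiv i (pderiv j φ) = pderiv j (pderiv i φ) := by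
  ext m
  rw [coeff_pderiv, coeff_pderiv, coeff_pderiv, coeff_pderiv]
  by_cases hij : i = j
  · subst hij; ring
  · have h1 : ((m + (Finsupp.single j 1 : Fin 3 →₀ ℕ)) i : ℕ) = m i := by
      simp [Finsupp.add_apply, Finsupp.single_apply, Ne.symm hij]
    have h2 : ((m + (Finsupp.single i 1 : Fin 3 →₀ ℕ)) j : ℕ) = m j := by
      simp [Finsupp.add_apply, Finsupp.single_apply, hij]
    have h3 : m + (Finsupp.single j 1 : Fin 3 →₀ ℕ) + Finsupp.single i 1
        = m + Finsupp.single i 1 + Finsupp.single j 1 := by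
      rw [add_assoc, add_assoc, add_comm (Finsupp.single j 1)]
    rw [h1, h2, h3]; ring

lemma s21 (φ : MvPolynomial (Fin 3) ℝ) :
    pderiv (2 : Fin 3) (pderiv (1 : Fin 3) φ) = pderiv 1 (pderiv 2 φ) :=
  pderiv_pderiv_comm _ _ _
lemma s10 (φ : MvPolynomial (Fin 3) ℝ) :
    pderiv (1 : Fin 3) (pderiv (0 : Fin 3) φ) = pderiv 0 (pderiv 1 φ) :=
  pderiv_pderiv_comm _ _ _
lemma s20 (φ : MvPolynomial (Fin 3) ℝ) :
    pderiv (2 : Fin 3) (pderiv (0 : Fin 3) φ) = pderiv 0 (pderiv 2 φ) :=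
  pderiv_pderiv_comm _ _ _

lemma degree_fin3 (d : Fin 3 →₀ ℕ) : d.degree = d 0 + d 1 + d 2 := by
  rw [show d.degree = ∑ i : Fin 3, d i from Finset.sum_subset (Finset.subset_univ _)
    (fun x _ hx => Finsupp.notMem_support_iff.mp hx), Fin.sum_univ_three]

lemma d2G_zero {G : MvPolynomial (Fin 3) ℝ} (hG : G.IsHomogeneous 3) (a b : Fin 3) :
    constantCoeff (pderiv a (pderiv b G)) = 0 := by
  rw [constantCoeff_eq]
  rw [coeff_pderiv, coeff_pderiv]
  have : coeff ((0 : Fin 3 →₀ ℕ) + Finsupp.single a 1 + Finsupp.single b 1) G = 0 := by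
    apply hG.coeff_eq_zero
    rw [degree_fin3]
    simp only [Finsupp.add_apply, Finsupp.coe_zero, Pi.zero_apply, Finsupp.single_apply]
    fin_cases a <;> fin_cases b <;> simp
  rw [this, mul_zero, mul_zero]

set_option maxHeartbeats 3000000 in
lemma pbracket_determines (k₁ k₂ : Fin 3 → ℝ) (A₁ A₂ K₁ K₂ : Matrix (Fin 3) (Fin 3) ℝ)
    (G₁ G₂ : MvPolynomial (Fin 3) ℝ)
    (hA₁ : A₁.IsSymm) (hA₂ : A₂.IsSymm) (hK₁ : K₁.trace = 0) (hK₂ : K₂.trace = 0)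
    (hG₁ : G₁.IsHomogeneous 3) (hG₂ : G₂.IsHomogeneous 3)
    (hb : ∀ g h, pbracket k₁ A₁ K₁ G₁ g h = pbracket k₂ A₂ K₂ G₂ g h) :
    k₁ = k₂ ∧ A₁ = A₂ ∧ K₁ = K₂ ∧ G₁ = G₂ := by
  have e01 := hb (X 0) (X 1)
  have e02 := hb (X 0) (X 2)
  have e12 := hb (X 1) (X 2)
  rw [pbracket_X01 k₁, pbracket_X01 k₂] at e01
  rw [pbracket_X02 k₁, pbracket_X02 k₂] at e02
  rw [pbracket_X12 k₁, pbracket_X12 k₂] at e12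
  have tr₁ : K₁ 0 0 + K₁ 1 1 + K₁ 2 2 = 0 := by
    simpa [Matrix.trace, Fin.sum_univ_three, Matrix.diag] using hK₁
  have tr₂ : K₂ 0 0 + K₂ 1 1 + K₂ 2 2 = 0 := by
    simpa [Matrix.trace, Fin.sum_univ_three, Matrix.diag] using hK₂
  have sy₁01 := hA₁.apply 0 1
  have sy₁02 := hA₁.apply 0 2
  have sy₁12 := hA₁.apply 1 2
  have sy₂01 := hA₂.apply 0 1
  have sy₂02 := hA₂.apply 0 2
  have sy₂12 := hA₂.apply 1 2
  have l01_0 := congrArg (fun p => constantCoeff (pderiv 0 p)) e01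
  simp only [pderiv_mul, pderiv_C_mul, pderiv_C, pderiv_X_self, pdX01, pdX02, pdX10, pdX12, pdX20, pdX21, map_add, map_sub, map_neg, _root_.map_mul, map_zero, _root_.map_one, mul_zero, zero_mul, add_zero, zero_add, mul_one, one_mul, sub_zero, zero_sub, neg_zero, constantCoeff_C, constantCoeff_X, s21, s10, s20, d2G_zero hG₁, d2G_zero hG₂] at l01_0
  have l01_1 := congrArg (fun p => constantCoeff (pderiv 1 p)) e01
  simp only [pderiv_mul, pderiv_C_mul, pderiv_C, pderiv_X_self, pdX01, pdX02, pdX10, pdX12, pdX20, pdX21, map_add, map_sub, map_neg, _root_.map_mul, map_zero, _root_.map_one, mul_zero, zero_mul, add_zero, zero_add, mul_one, one_mul, sub_zero, zero_sub, neg_zero, constantCoeff_C, constantCoeff_X, s21, s10, s20, d2G_zero hG₁, d2G_zero hG₂] at l01_1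
  have l01_2 := congrArg (fun p => constantCoeff (pderiv 2 p)) e01
  simp only [pderiv_mul, pderiv_C_mul, pderiv_C, pderiv_X_self, pdX01, pdX02, pdX10, pdX12, pdX20, pdX21, map_add, map_sub, map_neg, _root_.map_mul, map_zero, _root_.map_one, mul_zero, zero_mul, add_zero, zero_add, mul_one, one_mul, sub_zero, zero_sub, neg_zero, constantCoeff_C, constantCoeff_X, s21, s10, s20, d2G_zero hG₁, d2G_zero hG₂] at l01_2
  have l02_0 := congrArg (fun p => constantCoeff (pderiv 0 p)) e02
  simp only [pderiv_mul, pderiv_C_mul, pderiv_C, pderiv_X_self, pdX01, pdX02, pdX10, pdX12, pdX20, pdX21, map_add, map_sub, map_neg, _root_.map_mul, map_zero, _root_.map_one, mul_zero, zero_mul, add_zero, zero_add, mul_one, one_mul, sub_zero, zero_sub, neg_zero, constantCoeff_C, constantCoeff_X, s21, s10, s20, d2G_zero hG₁, d2G_zero hG₂] at l02_0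
  have l02_1 := congrArg (fun p => constantCoeff (pderiv 1 p)) e02
  simp only [pderiv_mul, pderiv_C_mul, pderiv_C, pderiv_X_self, pdX01, pdX02, pdX10, pdX12, pdX20, pdX21, map_add, map_sub, map_neg, _root_.map_mul, map_zero, _root_.map_one, mul_zero, zero_mul, add_zero, zero_add, mul_one, one_mul, sub_zero, zero_sub, neg_zero, constantCoeff_C, constantCoeff_X, s21, s10, s20, d2G_zero hG₁, d2G_zero hG₂] at l02_1
  have l02_2 := congrArg (fun p => constantCoeff (pderiv 2 p)) e02
  simp only [pderiv_mul, pderiv_C_mul, pderiv_C, pderiv_X_self, pdX01, pdX02, pdX10, pdX12, pdX20, pdX21, map_add, map_sub, map_neg, _root_.map_mul, map_zero, _root_.map_one, mul_zero, zero_mul, add_zero, zero_add, mul_one, one_mul, sub_zero, zero_sub, neg_zero, constantCoeff_C, constantCoeff_X, s21, s10, s20, d2G_zero hG₁, d2G_zero hG₂] at l02_2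
  have l12_0 := congrArg (fun p => constantCoeff (pderiv 0 p)) e12
  simp only [pderiv_mul, pderiv_C_mul, pderiv_C, pderiv_X_self, pdX01, pdX02, pdX10, pdX12, pdX20, pdX21, map_add, map_sub, map_neg, _root_.map_mul, map_zero, _root_.map_one, mul_zero, zero_mul, add_zero, zero_add, mul_one, one_mul, sub_zero, zero_sub, neg_zero, constantCoeff_C, constantCoeff_X, s21, s10, s20, d2G_zero hG₁, d2G_zero hG₂] at l12_0
  have l12_1 := congrArg (fun p => constantCoeff (pderiv 1 p)) e12
  simp only [pderiv_mul, pderiv_C_mul, pderiv_C, pderiv_X_self, pdX01, pdX02, pdX10, pdX12, pdX20, pdX21, map_add, map_sub, map_neg, _root_.map_mul, map_zero, _root_.map_one, mul_zero, zero_mul, add_zero, zero_add, mul_one, one_mul, sub_zero, zero_sub, neg_zero, constantCoeff_C, constantCoeff_X, s21, s10, s20, d2G_zero hG₁, d2G_zero hG₂] at l12_1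
  have l12_2 := congrArg (fun p => constantCoeff (pderiv 2 p)) e12
  simp only [pderiv_mul, pderiv_C_mul, pderiv_C, pderiv_X_self, pdX01, pdX02, pdX10, pdX12, pdX20, pdX21, map_add, map_sub, map_neg, _root_.map_mul, map_zero, _root_.map_one, mul_zero, zero_mul, add_zero, zero_add, mul_one, one_mul, sub_zero, zero_sub, neg_zero, constantCoeff_C, constantCoeff_X, s21, s10, s20, d2G_zero hG₁, d2G_zero hG₂] at l12_2
  have q01_00 := congrArg (fun p => constantCoeff (pderiv 0 (pderiv 0 p))) e01
  simp only [pderiv_mul, pderiv_C_mul, pderiv_C, pderiv_X_self, pdX01, pdX02, pdX10, pdX12, pdX20, pdX21, map_add, map_sub, map_neg, _root_.map_mul, map_zero, _root_.map_one, mul_zero, zero_mul, add_zero, zero_add, mul_one, one_mul, sub_zero, zero_sub, neg_zero, constantCoeff_C, constantCoeff_X, s21, s10, s20, d2G_zero hG₁, d2G_zero hG₂] at q01_00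
  have q01_01 := congrArg (fun p => constantCoeff (pderiv 0 (pderiv 1 p))) e01
  simp only [pderiv_mul, pderiv_C_mul, pderiv_C, pderiv_X_self, pdX01, pdX02, pdX10, pdX12, pdX20, pdX21, map_add, map_sub, map_neg, _root_.map_mul, map_zero, _root_.map_one, mul_zero, zero_mul, add_zero, zero_add, mul_one, one_mul, sub_zero, zero_sub, neg_zero, constantCoeff_C, constantCoeff_X, s21, s10, s20, d2G_zero hG₁, d2G_zero hG₂] at q01_01
  have q01_02 := congrArg (fun p => constantCoeff (pderiv 0 (pderiv 2 p))) e01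
  simp only [pderiv_mul, pderiv_C_mul, pderiv_C, pderiv_X_self, pdX01, pdX02, pdX10, pdX12, pdX20, pdX21, map_add, map_sub, map_neg, _root_.map_mul, map_zero, _root_.map_one, mul_zero, zero_mul, add_zero, zero_add, mul_one, one_mul, sub_zero, zero_sub, neg_zero, constantCoeff_C, constantCoeff_X, s21, s10, s20, d2G_zero hG₁, d2G_zero hG₂] at q01_02
  have q01_11 := congrArg (fun p => constantCoeff (pderiv 1 (pderiv 1 p))) e01
  simp only [pderiv_mul, pderiv_C_mul, pderiv_C, pderiv_X_self, pdX01, pdX02, pdX10, pdX12, pdX20, pdX21, map_add, map_sub, map_neg, _root_.map_mul, map_zero, _root_.map_one, mul_zero, zero_mul, add_zero, zero_add, mul_one, one_mul, sub_zero, zero_sub, neg_zero, constantCoeff_C, constantCoeff_X, s21, s10, s20, d2G_zero hG₁, d2G_zero hG₂] at q01_11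
  have q01_12 := congrArg (fun p => constantCoeff (pderiv 1 (pderiv 2 p))) e01
  simp only [pderiv_mul, pderiv_C_mul, pderiv_C, pderiv_X_self, pdX01, pdX02, pdX10, pdX12, pdX20, pdX21, map_add, map_sub, map_neg, _root_.map_mul, map_zero, _root_.map_one, mul_zero, zero_mul, add_zero, zero_add, mul_one, one_mul, sub_zero, zero_sub, neg_zero, constantCoeff_C, constantCoeff_X, s21, s10, s20, d2G_zero hG₁, d2G_zero hG₂] at q01_12
  have q01_22 := congrArg (fun p => constantCoeff (pderiv 2 (pderiv 2 p))) e01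
  simp only [pderiv_mul, pderiv_C_mul, pderiv_C, pderiv_X_self, pdX01, pdX02, pdX10, pdX12, pdX20, pdX21, map_add, map_sub, map_neg, _root_.map_mul, map_zero, _root_.map_one, mul_zero, zero_mul, add_zero, zero_add, mul_one, one_mul, sub_zero, zero_sub, neg_zero, constantCoeff_C, constantCoeff_X, s21, s10, s20, d2G_zero hG₁, d2G_zero hG₂] at q01_22
  have q02_00 := congrArg (fun p => constantCoeff (pderiv 0 (pderiv 0 p))) e02
  simp only [pderiv_mul, pderiv_C_mul, pderiv_C, pderiv_X_self, pdX01, pdX02, pdX10, pdX12, pdX20, pdX21, map_add, map_sub, map_neg, _root_.map_mul, map_zero, _root_.map_one, mul_zero, zero_mul, add_zero, zero_add, mul_one, one_mul, sub_zero, zero_sub, neg_zero, constantCoeff_C, constantCoeff_X, s21, s10, s20, d2G_zero hG₁, d2G_zero hG₂] at q02_00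
  have q02_01 := congrArg (fun p => constantCoeff (pderiv 0 (pderiv 1 p))) e02
  simp only [pderiv_mul, pderiv_C_mul, pderiv_C, pderiv_X_self, pdX01, pdX02, pdX10, pdX12, pdX20, pdX21, map_add, map_sub, map_neg, _root_.map_mul, map_zero, _root_.map_one, mul_zero, zero_mul, add_zero, zero_add, mul_one, one_mul, sub_zero, zero_sub, neg_zero, constantCoeff_C, constantCoeff_X, s21, s10, s20, d2G_zero hG₁, d2G_zero hG₂] at q02_01
  have q02_02 := congrArg (fun p => constantCoeff (pderiv 0 (pderiv 2 p))) e02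
  simp only [pderiv_mul, pderiv_C_mul, pderiv_C, pderiv_X_self, pdX01, pdX02, pdX10, pdX12, pdX20, pdX21, map_add, map_sub, map_neg, _root_.map_mul, map_zero, _root_.map_one, mul_zero, zero_mul, add_zero, zero_add, mul_one, one_mul, sub_zero, zero_sub, neg_zero, constantCoeff_C, constantCoeff_X, s21, s10, s20, d2G_zero hG₁, d2G_zero hG₂] at q02_02
  have q02_11 := congrArg (fun p => constantCoeff (pderiv 1 (pderiv 1 p))) e02
  simp only [pderiv_mul, pderiv_C_mul, pderiv_C, pderiv_X_self, pdX01, pdX02, pdX10, pdX12, pdX20, pdX21, map_add, map_sub, map_neg, _root_.map_mul, map_zero, _root_.map_one, mul_zero, zero_mul, add_zero, zero_add, mul_one, one_mul, sub_zero, zero_sub, neg_zero, constantCoeff_C, constantCoeff_X, s21, s10, s20, d2G_zero hG₁, d2G_zero hG₂] at q02_11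
  have q02_12 := congrArg (fun p => constantCoeff (pderiv 1 (pderiv 2 p))) e02
  simp only [pderiv_mul, pderiv_C_mul, pderiv_C, pderiv_X_self, pdX01, pdX02, pdX10, pdX12, pdX20, pdX21, map_add, map_sub, map_neg, _root_.map_mul, map_zero, _root_.map_one, mul_zero, zero_mul, add_zero, zero_add, mul_one, one_mul, sub_zero, zero_sub, neg_zero, constantCoeff_C, constantCoeff_X, s21, s10, s20, d2G_zero hG₁, d2G_zero hG₂] at q02_12
  have q02_22 := congrArg (fun p => constantCoeff (pderiv 2 (pderiv 2 p))) e02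
  simp only [pderiv_mul, pderiv_C_mul, pderiv_C, pderiv_X_self, pdX01, pdX02, pdX10, pdX12, pdX20, pdX21, map_add, map_sub, map_neg, _root_.map_mul, map_zero, _root_.map_one, mul_zero, zero_mul, add_zero, zero_add, mul_one, one_mul, sub_zero, zero_sub, neg_zero, constantCoeff_C, constantCoeff_X, s21, s10, s20, d2G_zero hG₁, d2G_zero hG₂] at q02_22
  have q12_00 := congrArg (fun p => constantCoeff (pderiv 0 (pderiv 0 p))) e12
  simp only [pderiv_mul, pderiv_C_mul, pderiv_C, pderiv_X_self, pdX01, pdX02, pdX10, pdX12, pdX20, pdX21, map_add, map_sub, map_neg, _root_.map_mul, map_zero, _root_.map_one, mul_zero, zero_mul, add_zero, zero_add, mul_one, one_mul, sub_zero, zero_sub, neg_zero, constantCoeff_C, constantCoeff_X, s21, s10, s20, d2G_zero hG₁, d2G_zero hG₂] at q12_00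
  have q12_01 := congrArg (fun p => constantCoeff (pderiv 0 (pderiv 1 p))) e12
  simp only [pderiv_mul, pderiv_C_mul, pderiv_C, pderiv_X_self, pdX01, pdX02, pdX10, pdX12, pdX20, pdX21, map_add, map_sub, map_neg, _root_.map_mul, map_zero, _root_.map_one, mul_zero, zero_mul, add_zero, zero_add, mul_one, one_mul, sub_zero, zero_sub, neg_zero, constantCoeff_C, constantCoeff_X, s21, s10, s20, d2G_zero hG₁, d2G_zero hG₂] at q12_01
  have q12_02 := congrArg (fun p => constantCoeff (pderiv 0 (pderiv 2 p))) e12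
  simp only [pderiv_mul, pderiv_C_mul, pderiv_C, pderiv_X_self, pdX01, pdX02, pdX10, pdX12, pdX20, pdX21, map_add, map_sub, map_neg, _root_.map_mul, map_zero, _root_.map_one, mul_zero, zero_mul, add_zero, zero_add, mul_one, one_mul, sub_zero, zero_sub, neg_zero, constantCoeff_C, constantCoeff_X, s21, s10, s20, d2G_zero hG₁, d2G_zero hG₂] at q12_02
  have q12_11 := congrArg (fun p => constantCoeff (pderiv 1 (pderiv 1 p))) e12
  simp only [pderiv_mul, pderiv_C_mul, pderiv_C, pderiv_X_self, pdX01, pdX02, pdX10, pdX12, pdX20, pdX21, map_add, map_sub, map_neg, _root_.map_mul, map_zero, _root_.map_one, mul_zero, zero_mul, add_zero, zero_add, mul_one, one_mul, sub_zero, zero_sub, neg_zero, constantCoeff_C, constantCoeff_X, s21, s10, s20, d2G_zero hG₁, d2G_zero hG₂] at q12_11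
  have q12_12 := congrArg (fun p => constantCoeff (pderiv 1 (pderiv 2 p))) e12
  simp only [pderiv_mul, pderiv_C_mul, pderiv_C, pderiv_X_self, pdX01, pdX02, pdX10, pdX12, pdX20, pdX21, map_add, map_sub, map_neg, _root_.map_mul, map_zero, _root_.map_one, mul_zero, zero_mul, add_zero, zero_add, mul_one, one_mul, sub_zero, zero_sub, neg_zero, constantCoeff_C, constantCoeff_X, s21, s10, s20, d2G_zero hG₁, d2G_zero hG₂] at q12_12
  have q12_22 := congrArg (fun p => constantCoeff (pderiv 2 (pderiv 2 p))) e12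
  simp only [pderiv_mul, pderiv_C_mul, pderiv_C, pderiv_X_self, pdX01, pdX02, pdX10, pdX12, pdX20, pdX21, map_add, map_sub, map_neg, _root_.map_mul, map_zero, _root_.map_one, mul_zero, zero_mul, add_zero, zero_add, mul_one, one_mul, sub_zero, zero_sub, neg_zero, constantCoeff_C, constantCoeff_X, s21, s10, s20, d2G_zero hG₁, d2G_zero hG₂] at q12_22
  have hk0 : k₁ 0 = k₂ 0 := by linarith
  have hk1 : k₁ 1 = k₂ 1 := by linarith
  have hk2 : k₁ 2 = k₂ 2 := by linarith
  have hA00 : A₁ 0 0 = A₂ 0 0 := by linarith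
  have hK00 : K₁ 0 0 = K₂ 0 0 := by linarith
  have hA01 : A₁ 0 1 = A₂ 0 1 := by linarith
  have hK01 : K₁ 0 1 = K₂ 0 1 := by linarith
  have hA02 : A₁ 0 2 = A₂ 0 2 := by linarith
  have hK02 : K₁ 0 2 = K₂ 0 2 := by linarith
  have hA10 : A₁ 1 0 = A₂ 1 0 := by linarith
  have hK10 : K₁ 1 0 = K₂ 1 0 := by linarith
  have hA11 : A₁ 1 1 = A₂ 1 1 := by linarith
  have hK11 : K₁ 1 1 = K₂ 1 1 := by linarith
  have hA12 : A₁ 1 2 = A₂ 1 2 := by linarith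
  have hK12 : K₁ 1 2 = K₂ 1 2 := by linarith
  have hA20 : A₁ 2 0 = A₂ 2 0 := by linarith
  have hK20 : K₁ 2 0 = K₂ 2 0 := by linarith
  have hA21 : A₁ 2 1 = A₂ 2 1 := by linarith
  have hK21 : K₁ 2 1 = K₂ 2 1 := by linarith
  have hA22 : A₁ 2 2 = A₂ 2 2 := by linarith
  have hK22 : K₁ 2 2 = K₂ 2 2 := by linarith
  have hk : k₁ = k₂ := by
    funext i
    fin_cases i
    · exact hk0
    · exact hk1
    · exact hk2
  have hA : A₁ = A₂ := by
    ext i j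
    fin_cases i <;> fin_cases j
    · exact hA00
    · exact hA01
    · exact hA02
    · exact hA10
    · exact hA11
    · exact hA12
    · exact hA20
    · exact hA21
    · exact hA22
  have hK : K₁ = K₂ := by
    ext i j
    fin_cases i <;> fin_cases j
    · exact hK00
    · exact hK01
    · exact hK02
    · exact hK10
    · exact hK11
    · exact hK12
    · exact hK20
    · exact hK21
    · exact hK22
  subst hk; subst hA; subst hK
  refine ⟨rfl, rfl, rfl, ?_⟩
  have hd2 : pderiv 2 G₁ = pderiv 2 G₂ := by linear_combination e01
  have hd1 : pderiv 1 G₁ = pderiv 1 G₂ := by linear_combination -e02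
  have hd0 : pderiv 0 G₁ = pderiv 0 G₂ := by linear_combination e12
  have heu : euler G₁ = euler G₂ := by
    simp only [euler, Fin.sum_univ_three, hd0, hd1, hd2]
  rw [euler_of_isHomogeneous hG₁, euler_of_isHomogeneous hG₂] at heu
  have h3 : (C ((3:ℕ):ℝ) : MvPolynomial (Fin 3) ℝ) ≠ 0 := by
    simp only [ne_eq, MvPolynomial.C_eq_zero]
    norm_num
  exact mul_left_cancel₀ h3 heu

/-- Let `(k, f = XᵀAX)` be a compatible pair (`A` symmetric,
`Ak = 0`) and for `i = 1,2` let `(Kᵢ,Fᵢ)` be compatible pairs (`tr Kᵢ = 0`, `Fᵢ`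
homogeneous cubic, `(KᵢX)·∇Fᵢ = 0`) such that both deformed brackets satisfy the
Jacobi identity. Then `T ∈ GL(3,ℝ)` pushes the first Poisson structure forward to the
second — `{g∘T, h∘T}₁ = ({g,h}₂)∘T` for all `g, h` — if and only if `Tk = k`,
`TᵀAT = det(T)·A`, `K₂ = TK₁T⁻¹` and `F₂∘T = det(T)·F₁`. -/
theorem quadratic_deformation_isomorphism
    (k : Fin 3 → ℝ) (A : Matrix (Fin 3) (Fin 3) ℝ) (hA : A.IsSymm) (hAk : A.mulVec k = 0)
    (K₁ K₂ : Matrix (Fin 3) (Fin 3) ℝ) (hK₁ : K₁.trace = 0) (hK₂ : K₂.trace = 0)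
    (F₁ F₂ : MvPolynomial (Fin 3) ℝ)
    (hF₁ : F₁.IsHomogeneous 3) (hF₂ : F₂.IsHomogeneous 3)
    (hK₁F₁ : dotGradLin K₁ F₁ = 0) (hK₂F₂ : dotGradLin K₂ F₂ = 0)
    (hJac₁ : ∀ g h l, pbracket k A K₁ F₁ (pbracket k A K₁ F₁ g h) l
                    + pbracket k A K₁ F₁ (pbracket k A K₁ F₁ h l) g
                    + pbracket k A K₁ F₁ (pbracket k A K₁ F₁ l g) h = 0)
    (hJac₂ : ∀ g h l, pbracket k A K₂ F₂ (pbracket k A K₂ F₂ g h) l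
                    + pbracket k A K₂ F₂ (pbracket k A K₂ F₂ h l) g
                    + pbracket k A K₂ F₂ (pbracket k A K₂ F₂ l g) h = 0)
    (T : Matrix (Fin 3) (Fin 3) ℝ) (hT : IsUnit T.det) :
    (∀ g h, pbracket k A K₁ F₁ (polyComp T g) (polyComp T h)
        = polyComp T (pbracket k A K₂ F₂ g h)) ↔
      (T.mulVec k = k ∧ Tᵀ * A * T = T.det • A ∧
        K₂ = T * K₁ * T⁻¹ ∧ polyComp T F₂ = C T.det * F₁) := by

  have hT'T : T⁻¹ * T = 1 := Matrix.nonsing_inv_mul T hT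
  have hTT' : T * T⁻¹ = 1 := Matrix.mul_nonsing_inv T hT
  have hTinvT : ∀ p : MvPolynomial (Fin 3) ℝ, polyComp T⁻¹ (polyComp T p) = p := fun p => by
    rw [polyComp_polyComp, hTT', polyComp_one]
  have hTTinv : ∀ p : MvPolynomial (Fin 3) ℝ, polyComp T (polyComp T⁻¹ p) = p := fun p => by
    rw [polyComp_polyComp, hT'T, polyComp_one]
  have hinj : ∀ p q : MvPolynomial (Fin 3) ℝ, polyComp T p = polyComp T q → p = q := by
    intro p q hpq
    have := congrArg (polyComp T⁻¹) hpq
    rwa [hTinvT, hTinvT] at this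
  have hTTt : Tᵀ * (T⁻¹)ᵀ = 1 := by rw [← Matrix.transpose_mul, hT'T, Matrix.transpose_one]
  have hTtT : (T⁻¹)ᵀ * Tᵀ = 1 := by rw [← Matrix.transpose_mul, hTT', Matrix.transpose_one]
  constructor
  · intro H
    have H' : ∀ g h, pbracket (T.mulVec k) (T.det • ((T⁻¹)ᵀ * A * T⁻¹)) (T * K₁ * T⁻¹)
        (C T.det * polyComp T⁻¹ F₁) g h = pbracket k A K₂ F₂ g h := by
      intro g h
      apply hinj
      rw [← pbracket_polyComp k A K₁ F₁ T hT g h, H g h]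
    have hA' : (T.det • ((T⁻¹)ᵀ * A * T⁻¹)).IsSymm := by
      unfold Matrix.IsSymm
      rw [Matrix.transpose_smul, Matrix.transpose_mul, Matrix.transpose_mul,
        Matrix.transpose_transpose, hA.eq]
      rw [Matrix.mul_assoc]
    have hK' : (T * K₁ * T⁻¹).trace = 0 := by
      rw [Matrix.trace_mul_comm, ← Matrix.mul_assoc, hT'T, Matrix.one_mul]
      exact hK₁
    have hF' : (C T.det * polyComp T⁻¹ F₁).IsHomogeneous 3 := by
      have h1 : (polyComp T⁻¹ F₁).IsHomogeneous 3 := by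
        have := hF₁.aeval (fun i => ∑ j : Fin 3, C (T⁻¹ i j) * X j)
          (fun i => by
            apply MvPolynomial.IsHomogeneous.sum
            intro j _
            simpa using (MvPolynomial.isHomogeneous_X ℝ j).C_mul (T⁻¹ i j))
        simpa [polyComp] using this
      simpa using h1.C_mul T.det
    obtain ⟨hk, hA2, hK2, hF2⟩ := pbracket_determines _ _ _ _ _ _ _ _
      hA' hA hK' hK₂ hF' hF₂ H'
    refine ⟨hk, ?_, hK2.symm, ?_⟩
    · calc Tᵀ * A * T = Tᵀ * (T.det • ((T⁻¹)ᵀ * A * T⁻¹)) * T := by rw [hA2]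
        _ = T.det • (Tᵀ * (T⁻¹)ᵀ * A * (T⁻¹ * T)) := by
            rw [Matrix.mul_smul, Matrix.smul_mul]
            congr 1
            rw [← Matrix.mul_assoc, ← Matrix.mul_assoc, Matrix.mul_assoc (Tᵀ * (T⁻¹)ᵀ * A)]
        _ = T.det • A := by rw [hTTt, hT'T, Matrix.one_mul, Matrix.mul_one]
    · rw [← hF2, polyComp_mul, polyComp_C, hTTinv]
  · rintro ⟨hk, hAT, hKT, hFT⟩ g h
    rw [pbracket_polyComp k A K₁ F₁ T hT g h]
    have h2 : T.det • ((T⁻¹)ᵀ * A * T⁻¹) = A := by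
      calc T.det • ((T⁻¹)ᵀ * A * T⁻¹) = (T⁻¹)ᵀ * (T.det • A) * T⁻¹ := by
            rw [Matrix.mul_smul, Matrix.smul_mul]
        _ = (T⁻¹)ᵀ * (Tᵀ * A * T) * T⁻¹ := by rw [hAT]
        _ = ((T⁻¹)ᵀ * Tᵀ) * A * (T * T⁻¹) := by
            rw [← Matrix.mul_assoc, ← Matrix.mul_assoc, Matrix.mul_assoc ((T⁻¹)ᵀ * Tᵀ * A)]
        _ = A := by rw [hTtT, hTT', Matrix.one_mul, Matrix.mul_one]
    have h4 : C T.det * polyComp T⁻¹ F₁ = F₂ := by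
      have := congrArg (polyComp T⁻¹) hFT
      rw [hTinvT, polyComp_mul, polyComp_C] at this
      exact this.symm
    rw [hk, h2, ← hKT, h4]


end
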